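/- Suppose C(t) is nonempty, closed and convex for every t ∈ [0,T]. If u and w are two solutions of the sweeping process (P) with the same initial value u₀ ∈ C(0), with Bochner-integrable derivatives v_u and v_w respectively, then the difference x := w − u satisfies: x(0) = 0, A₀ x(t) = 0 for every t ∈ [0,T], and for almost every t ∈ [0,T] both v_w(t) − v_u(t) ∈ C(t) − v_u(t) and A₀(v_w(t) − v_u(t)) = 0. In other words, Sol(P,u₀) ⊆ u + K, where K is the set of all W^{1,1} functions y with y(0) = 0 whose derivative lies in (C(t) − v_u(t)) ∩ ker A₀ for almost every t. -/

import Mathlib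

open MeasureTheory Set Function Filter
open scoped RealInnerProductSpace Topology


lemma ker_of_quad {H : Type*} [NormedAddCommGroup H] [InnerProductSpace ℝ H]
    (A : H →L[ℝ] H) (hsym : ∀ x y : H, ⟪A x, y⟫ = ⟪x, A y⟫)
    (hpos : ∀ x : H, 0 ≤ ⟪A x, x⟫) (y : H) (hy : ⟪A y, y⟫ = 0) : A y = 0 := by
  have key : ∀ l : ℝ, 0 ≤ 2*l*⟪A y, A y⟫ + l^2 * ⟪A (A y), A y⟫ := by
    intro l
    have := hpos (y + l • A y)
    have e1 : ⟪A (A y), y⟫ = ⟪A y, A y⟫ := by rw [hsym]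
    simp only [map_add, ContinuousLinearMap.map_smul, inner_add_left, inner_add_right,
      real_inner_smul_left, real_inner_smul_right, e1, hy] at this
    nlinarith [this]
  have hq := hpos (A y)
  set c := ⟪A y, A y⟫ with hcdef
  set q := ⟪A (A y), A y⟫
  have hc : 0 ≤ c := real_inner_self_nonneg
  have h1 := key (-(c/(q+1)))
  have hq1 : (0:ℝ) < q + 1 := by linarith
  have hid : (2 * -(c/(q+1)) * c + (-(c/(q+1)))^2 * q) * (q+1)^2 = -(c^2) * (q + 2) := by
    field_simp
    ring
  have h3 : 0 ≤ -(c^2) * (q + 2) := by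
    rw [← hid]; exact mul_nonneg h1 (sq_nonneg _)
  have hc0 : c = 0 := by nlinarith [sq_nonneg c]
  have : ‖A y‖^2 = 0 := by rw [← real_inner_self_eq_norm_sq]; exact hc0
  simpa using (pow_eq_zero_iff (by norm_num)).mp this


lemma ae_zero_of_intervalIntegral_zero {H : Type*} [NormedAddCommGroup H]
    [NormedSpace ℝ H] [CompleteSpace H] {T : ℝ}
    {h : ℝ → H} (hh : IntegrableOn h (Icc 0 T))
    (hz : ∀ t ∈ Icc (0:ℝ) T, ∫ τ in (0:ℝ)..t, h τ = 0) :
    ∀ᵐ t ∂(volume.restrict (Icc (0:ℝ) T)), h t = 0 := by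
  set h' : ℝ → H := (Icc (0:ℝ) T).indicator h with hh'def
  have hint : Integrable h' := (integrable_indicator_iff measurableSet_Icc).2 hh
  have hii : ∀ a ∈ Icc (0:ℝ) T, IntervalIntegrable h volume 0 a := by
    intro a ha
    apply IntegrableOn.intervalIntegrable
    rw [uIcc_of_le ha.1]
    exact hh.mono_set (Icc_subset_Icc le_rfl ha.2)
  -- all ball integrals of h' vanish
  have hball : ∀ x : ℝ, ∀ r : ℝ, ∫ y in Metric.closedBall x r, h' y = 0 := by
    intro x r
    rw [hh'def, setIntegral_indicator measurableSet_Icc, Real.closedBall_eq_Icc, Icc_inter_Icc]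
    rcases le_or_gt ((x - r) ⊔ 0) ((x + r) ⊓ T) with hle | hlt
    · have h0 : (0:ℝ) ≤ (x - r) ⊔ 0 := le_sup_right
      have hTb : (x + r) ⊓ T ≤ T := inf_le_right
      have ha : (x - r) ⊔ 0 ∈ Icc (0:ℝ) T := ⟨h0, le_trans hle hTb⟩
      have hb : (x + r) ⊓ T ∈ Icc (0:ℝ) T := ⟨le_trans h0 hle, hTb⟩
      have e : ∫ y in Icc ((x-r) ⊔ 0) ((x+r) ⊓ T), h y = ∫ y in ((x-r) ⊔ 0)..((x+r) ⊓ T), h y := by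
        rw [intervalIntegral.integral_of_le hle, integral_Icc_eq_integral_Ioc]
      rw [e, ← intervalIntegral.integral_interval_sub_left (hii _ hb) (hii _ ha),
          hz _ hb, hz _ ha, sub_zero]
    · rw [Icc_eq_empty (not_le.2 hlt)]; simp
  -- Lebesgue differentiation
  have hmain : ∀ᵐ x ∂(volume : Measure ℝ), h' x = 0 := by
    filter_upwards [IsUnifLocDoublingMeasure.ae_tendsto_average
      (μ := (volume : Measure ℝ)) hint.locallyIntegrable 1] with x hx
    have hlim := hx (fun _ : ℝ => x) id tendsto_id (by
      filter_upwards [self_mem_nhdsWithin] with j (hj : j ∈ Ioi (0:ℝ))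
      show x ∈ Metric.closedBall x (1 * id j)
      have : (0:ℝ) ≤ 1 * id j := by simpa using le_of_lt hj
      exact Metric.mem_closedBall_self this)
    simp only [id_eq] at hlim
    have hzero : (fun j : ℝ => ⨍ y in Metric.closedBall x j, h' y) = fun _ => 0 := by
      funext j
      rw [setAverage_eq, hball, smul_zero]
    rw [hzero] at hlim
    exact (tendsto_nhds_unique tendsto_const_nhds hlim).symm
  have := ae_restrict_of_ae (μ := (volume : Measure ℝ)) (s := Icc 0 T) hmain
  filter_upwards [this, ae_restrict_mem measurableSet_Icc] with x hx hmem
  rwa [hh'def, indicator_of_mem hmem] at hx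


lemma quad_eq_two_integral {H : Type*} [NormedAddCommGroup H] [InnerProductSpace ℝ H]
    [CompleteSpace H] (A : H →L[ℝ] H) (hsym : ∀ x y : H, ⟪A x, y⟫ = ⟪x, A y⟫)
    {t : ℝ} {g : ℝ → H} (hg : IntegrableOn g (Ioc 0 t)) :
    ⟪A (∫ τ in Ioc (0:ℝ) t, g τ), ∫ τ in Ioc (0:ℝ) t, g τ⟫
      = 2 * ∫ σ in Ioc (0:ℝ) t, ⟪A (g σ), ∫ τ in Ioc (0:ℝ) σ, g τ⟫ := by
  set μ := (volume : Measure ℝ).restrict (Ioc (0:ℝ) t) with hμ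
  have hgμ : Integrable g μ := hg
  set F : ℝ × ℝ → ℝ := fun z => ⟪A (g z.1), g z.2⟫ with hF
  set ψ : ℝ → ℝ := fun σ => ⟪A (g σ), ∫ τ in Ioc (0:ℝ) σ, g τ⟫ with hψ
  -- integrability of F on the product
  have hAg : Integrable (fun σ => A (g σ)) μ := A.integrable_comp hgμ
  have hFm : AEStronglyMeasurable F (μ.prod μ) :=
    (hAg.aestronglyMeasurable.comp_fst (ν := μ)).inner (hgμ.aestronglyMeasurable.comp_snd (μ := μ))
  have hFint : Integrable F (μ.prod μ) := by
    refine Integrable.mono' ((hAg.norm.mul_prod hgμ.norm : _)) hFm ?_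
    · refine Filter.Eventually.of_forall (fun z => ?_)
      calc ‖F z‖ ≤ ‖A (g z.1)‖ * ‖g z.2‖ := norm_inner_le_norm _ _
        _ = _ := rfl
  -- split into the two triangles
  have hle : MeasurableSet {z : ℝ × ℝ | z.2 ≤ z.1} := measurableSet_le measurable_snd measurable_fst
  have hlt : MeasurableSet {z : ℝ × ℝ | z.1 < z.2} := measurableSet_lt measurable_fst measurable_snd
  set F1 : ℝ × ℝ → ℝ := {z : ℝ × ℝ | z.2 ≤ z.1}.indicator F with hF1
  set F2 : ℝ × ℝ → ℝ := {z : ℝ × ℝ | z.1 < z.2}.indicator F with hF2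
  have hsplit : F = F1 + F2 := by
    funext z
    by_cases h : z.2 ≤ z.1
    · simp [hF1, hF2, indicator, h, not_lt.2 h]
    · simp [hF1, hF2, indicator, h, not_le.1 h]
  have hF1int : Integrable F1 (μ.prod μ) := hFint.indicator hle
  have hF2int : Integrable F2 (μ.prod μ) := hFint.indicator hlt
  -- first triangle
  have e1 : ∫ z, F1 z ∂(μ.prod μ) = ∫ σ, ψ σ ∂μ := by
    rw [← integral_integral (f := fun σ τ => F1 (σ, τ)) (by exact hF1int)]
    refine setIntegral_congr_fun measurableSet_Ioc (fun σ hσ => ?_)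
    have : (fun τ => F1 (σ, τ)) = (Iic σ).indicator (fun τ => ⟪A (g σ), g τ⟫) := by
      funext τ
      by_cases h : τ ≤ σ <;> simp [hF1, indicator, h, hF]
    rw [this, integral_indicator measurableSet_Iic, hμ, Measure.restrict_restrict measurableSet_Iic]
    have hset : Iic σ ∩ Ioc 0 t = Ioc 0 σ := by
      ext τ; constructor
      · rintro ⟨h1, h2, h3⟩; exact ⟨h2, h1⟩
      · rintro ⟨h1, h2⟩; exact ⟨h2, h1, h2.trans hσ.2⟩
    rw [hset, integral_inner (hg.mono_set (Ioc_subset_Ioc le_rfl hσ.2))]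
  -- second triangle
  have e2 : ∫ z, F2 z ∂(μ.prod μ) = ∫ σ, ψ σ ∂μ := by
    rw [← integral_integral (f := fun σ τ => F2 (σ, τ)) (by exact hF2int),
        integral_integral_swap (f := fun σ τ => F2 (σ, τ)) (by exact hF2int)]
    refine setIntegral_congr_fun measurableSet_Ioc (fun τ hτ => ?_)
    have : (fun σ => F2 (σ, τ)) = (Iio τ).indicator (fun σ => ⟪A (g σ), g τ⟫) := by
      funext σ
      by_cases h : σ < τ <;> simp [hF2, indicator, h, hF]
    rw [this, integral_indicator measurableSet_Iio, hμ, Measure.restrict_restrict measurableSet_Iio]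
    have hset : Iio τ ∩ Ioc 0 t = Ioo 0 τ := by
      ext σ; constructor
      · rintro ⟨h1, h2, h3⟩; exact ⟨h2, h1⟩
      · rintro ⟨h1, h2⟩; exact ⟨h2, h1, h2.le.trans hτ.2⟩
    have hIoo : ∫ σ in Ioo (0:ℝ) τ, ⟪A (g σ), g τ⟫ = ∫ σ in Ioc (0:ℝ) τ, ⟪A (g σ), g τ⟫ :=
      (integral_Ioc_eq_integral_Ioo).symm
    rw [hset, hIoo]
    have hgτ : IntegrableOn g (Ioc 0 τ) := hg.mono_set (Ioc_subset_Ioc le_rfl hτ.2)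
    have : ∫ σ in Ioc (0:ℝ) τ, ⟪A (g σ), g τ⟫ = ⟪g τ, ∫ σ in Ioc (0:ℝ) τ, A (g σ)⟫ := by
      rw [← integral_inner (A.integrable_comp hgτ)]
      exact setIntegral_congr_fun measurableSet_Ioc (fun σ _ => real_inner_comm _ _)
    rw [this, A.integral_comp_comm hgτ, real_inner_comm, hsym, hψ]
    exact real_inner_comm _ _
  -- assemble
  have lhs : ⟪A (∫ τ, g τ ∂μ), ∫ τ, g τ ∂μ⟫ = ∫ z, F z ∂(μ.prod μ) :=
    calc ⟪A (∫ τ, g τ ∂μ), ∫ τ, g τ ∂μ⟫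
        = ⟪∫ σ, A (g σ) ∂μ, ∫ τ, g τ ∂μ⟫ := by rw [A.integral_comp_comm hgμ]
      _ = ⟪∫ τ, g τ ∂μ, ∫ σ, A (g σ) ∂μ⟫ := real_inner_comm _ _
      _ = ∫ σ, ⟪∫ τ, g τ ∂μ, A (g σ)⟫ ∂μ := (integral_inner hAg _).symm
      _ = ∫ σ, ∫ τ, F (σ, τ) ∂μ ∂μ := integral_congr_ae (Filter.Eventually.of_forall (fun σ => by
            show ⟪∫ τ, g τ ∂μ, A (g σ)⟫ = ∫ τ, F (σ, τ) ∂μ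
            rw [real_inner_comm]
            exact (integral_inner hgμ _).symm))
      _ = ∫ z, F z ∂(μ.prod μ) := integral_integral (by exact hFint)
  show ⟪A (∫ τ, g τ ∂μ), ∫ τ, g τ ∂μ⟫ = 2 * ∫ σ, ψ σ ∂μ
  rw [lhs, hsplit]
  have : ∫ z, (F1 + F2) z ∂(μ.prod μ) = ∫ z, F1 z ∂(μ.prod μ) + ∫ z, F2 z ∂(μ.prod μ) := by
    simp only [Pi.add_apply]
    exact integral_add hF1int hF2int
  rw [this, e1, e2]
  ring

/-- `u` (with Bochner-integrable derivative `v`) is a solution of the sweeping process (P)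
with velocity constraint `C`, data `A₀, A₁, f`, and initial value `u₀` on `[0,T]`. -/
def SweepSol {H : Type*} [NormedAddCommGroup H] [InnerProductSpace ℝ H]
    (T : ℝ) (A₀ A₁ : H →L[ℝ] H) (f : ℝ → H) (C : ℝ → Set H)
    (u₀ : H) (u v : ℝ → H) : Prop :=
  IntegrableOn v (Icc 0 T) ∧
  (∀ t ∈ Icc (0:ℝ) T, u t = u₀ + ∫ τ in (0:ℝ)..t, v τ) ∧
  (∀ᵐ t ∂(volume.restrict (Icc (0:ℝ) T)),
    v t ∈ C t ∧ ∀ z ∈ C t, 0 ≤ ⟪A₁ (v t) + A₀ (u t) - f t, z - v t⟫)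

theorem solution_set_outer_estimate
    {H : Type*} [NormedAddCommGroup H] [InnerProductSpace ℝ H] [CompleteSpace H]
    (T : ℝ) (hT : 0 < T) (A₀ A₁ : H →L[ℝ] H)
    (hA₀sym : ∀ x y : H, ⟪A₀ x, y⟫ = ⟪x, A₀ y⟫)
    (hA₁sym : ∀ x y : H, ⟪A₁ x, y⟫ = ⟪x, A₁ y⟫)
    (hA₀pos : ∀ x : H, 0 ≤ ⟪A₀ x, x⟫)
    (hA₁pos : ∀ x : H, 0 ≤ ⟪A₁ x, x⟫)
    (f : ℝ → H) (hf : ContinuousOn f (Icc 0 T))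
    (C : ℝ → Set H)
    (hC : ∀ t ∈ Icc (0:ℝ) T, (C t).Nonempty ∧ IsClosed (C t) ∧ Convex ℝ (C t))
    (u₀ : H) (hu₀ : u₀ ∈ C 0)
    (u w vu vw : ℝ → H)
    (hu : SweepSol T A₀ A₁ f C u₀ u vu)
    (hw : SweepSol T A₀ A₁ f C u₀ w vw) :
    (w 0 - u 0 = 0) ∧
    (∀ t ∈ Icc (0:ℝ) T, A₀ (w t - u t) = 0) ∧
    (∀ᵐ t ∂(volume.restrict (Icc (0:ℝ) T)),
      (∃ c ∈ C t, vw t - vu t = c - vu t) ∧ A₀ (vw t - vu t) = 0) := by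
  obtain ⟨hvu, hurep, huVI⟩ := hu
  obtain ⟨hvw, hwrep, hwVI⟩ := hw
  set g : ℝ → H := fun τ => vw τ - vu τ with hgdef
  have hg : IntegrableOn g (Icc 0 T) := hvw.sub hvu
  have h0mem : (0:ℝ) ∈ Icc (0:ℝ) T := ⟨le_rfl, hT.le⟩
  -- interval integrability
  have hii : ∀ {φ : ℝ → H}, IntegrableOn φ (Icc 0 T) → ∀ t ∈ Icc (0:ℝ) T,
      IntervalIntegrable φ volume 0 t := by
    intro φ hφ t ht
    apply IntegrableOn.intervalIntegrable
    rw [uIcc_of_le ht.1]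
    exact hφ.mono_set (Icc_subset_Icc le_rfl ht.2)
  -- difference representation
  have hdiff : ∀ t ∈ Icc (0:ℝ) T, w t - u t = ∫ τ in Ioc (0:ℝ) t, g τ := by
    intro t ht
    rw [hurep t ht, hwrep t ht]
    have : (∫ τ in (0:ℝ)..t, vw τ) - ∫ τ in (0:ℝ)..t, vu τ = ∫ τ in (0:ℝ)..t, g τ :=
      (intervalIntegral.integral_sub (hii hvw t ht) (hii hvu t ht)).symm
    rw [add_sub_add_left_eq_sub, this, intervalIntegral.integral_of_le ht.1]
  have hx0 : w 0 - u 0 = 0 := by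
    rw [hdiff 0 h0mem]; simp
  -- combined variational inequality, a.e.
  have hkey : ∀ᵐ t ∂(volume.restrict (Icc (0:ℝ) T)),
      ⟪A₀ (w t - u t), g t⟫ ≤ 0 ∧ vw t ∈ C t := by
    filter_upwards [huVI, hwVI, ae_restrict_mem measurableSet_Icc] with t htu htw htmem
    obtain ⟨hau, hVIu⟩ := htu
    obtain ⟨haw, hVIw⟩ := htw
    refine ⟨?_, haw⟩
    have h1 := hVIu (vw t) haw
    have h2 := hVIw (vu t) hau
    have e2 : ⟪A₁ (vw t) + A₀ (w t) - f t, vu t - vw t⟫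
        = -⟪A₁ (vw t) + A₀ (w t) - f t, vw t - vu t⟫ := by
      rw [← inner_neg_right, neg_sub]
    have evec : (A₁ (vu t) + A₀ (u t) - f t) - (A₁ (vw t) + A₀ (w t) - f t)
        = -(A₁ (vw t - vu t) + A₀ (w t - u t)) := by
      simp only [map_sub]; abel
    have hsum : 0 ≤ ⟪(A₁ (vu t) + A₀ (u t) - f t) - (A₁ (vw t) + A₀ (w t) - f t), vw t - vu t⟫ := by
      rw [inner_sub_left]
      rw [e2] at h2
      linarith
    rw [evec, inner_neg_left, inner_add_left] at hsum
    have hq := hA₁pos (vw t - vu t)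
    show ⟪A₀ (w t - u t), vw t - vu t⟫ ≤ 0
    linarith
  -- kernel property for all t
  have hker : ∀ t ∈ Icc (0:ℝ) T, A₀ (w t - u t) = 0 := by
    intro t ht
    have hgt : IntegrableOn g (Ioc 0 t) := hg.mono_set (fun τ hτ => ⟨hτ.1.le, hτ.2.trans ht.2⟩)
    have hquad := quad_eq_two_integral A₀ hA₀sym hgt
    have hae : ∀ᵐ σ ∂(volume.restrict (Ioc (0:ℝ) t)),
        ⟪A₀ (g σ), ∫ τ in Ioc (0:ℝ) σ, g τ⟫ ≤ 0 := by
      have hsub : Ioc (0:ℝ) t ⊆ Icc 0 T := fun τ hτ => ⟨hτ.1.le, hτ.2.trans ht.2⟩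
      filter_upwards [ae_restrict_of_ae_restrict_of_subset hsub hkey,
        ae_restrict_mem measurableSet_Ioc] with σ hσ hσmem
      have hd := hdiff σ ⟨hσmem.1.le, hσmem.2.trans ht.2⟩
      have : ⟪A₀ (g σ), ∫ τ in Ioc (0:ℝ) σ, g τ⟫ = ⟪A₀ (w σ - u σ), g σ⟫ := by
        rw [← hd, hA₀sym, real_inner_comm]
      rw [this]
      exact hσ.1
    have hnonpos : ⟪A₀ (∫ τ in Ioc (0:ℝ) t, g τ), ∫ τ in Ioc (0:ℝ) t, g τ⟫ ≤ 0 := by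
      rw [hquad]
      have := integral_nonpos_of_ae hae
      linarith
    have hzero : ⟪A₀ (∫ τ in Ioc (0:ℝ) t, g τ), ∫ τ in Ioc (0:ℝ) t, g τ⟫ = 0 :=
      le_antisymm hnonpos (hA₀pos _)
    rw [hdiff t ht]
    exact ker_of_quad A₀ hA₀sym hA₀pos _ hzero
  refine ⟨hx0, hker, ?_⟩
  -- a.e. properties of the derivative
  have hA₀g : IntegrableOn (fun τ => A₀ (g τ)) (Icc 0 T) := A₀.integrable_comp hg
  have hzz : ∀ t ∈ Icc (0:ℝ) T, ∫ τ in (0:ℝ)..t, A₀ (g τ) = 0 := by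
    intro t ht
    have : ∫ τ in (0:ℝ)..t, A₀ (g τ) = A₀ (∫ τ in (0:ℝ)..t, g τ) :=
      A₀.intervalIntegral_comp_comm ((hii hvw t ht).sub (hii hvu t ht))
    rw [this, intervalIntegral.integral_of_le ht.1, ← hdiff t ht, hker t ht]
  filter_upwards [ae_zero_of_intervalIntegral_zero hA₀g hzz, hkey] with t h1 h2
  exact ⟨⟨vw t, h2.2, rfl⟩, h1⟩
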